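/- Let A and B be n×n nonnegative matrices with A ⊗ B = B ⊗ A. Then μ(A ⊗ B) ≤ μ(A)·μ(B). Moreover, if A and B are irreducible, then μ(A ⊗ B) = μ(A)·μ(B). -/

import Mathlib

open Filter Topology

/-- Max-times product of two square nonnegative matrices. -/
noncomputable def mProd {m : Type*} [Fintype m] (A B : Matrix m m NNReal) : Matrix m m NNReal :=
  fun i j => Finset.univ.sup fun k => A i k * B k j

/-- Max-times powers: `mPow A 0 = I`, `mPow A (k+1) = A ⊗ mPow A k`. -/
noncomputable def mPow {m : Type*} [Fintype m] [DecidableEq m] (A : Matrix m m NNReal) :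
    ℕ → Matrix m m NNReal
  | 0 => 1
  | k + 1 => mProd A (mPow A k)

/-- Max-times action of a matrix on a nonnegative vector. -/
noncomputable def mVec {m : Type*} [Fintype m] (A : Matrix m m NNReal) (x : m → NNReal) :
    m → NNReal :=
  fun i => Finset.univ.sup fun k => A i k * x k

/-- Maximum circuit geometric mean of a nonnegative matrix. -/
noncomputable def mu {m : Type*} [Fintype m] [DecidableEq m] (A : Matrix m m NNReal) : NNReal :=
  (Finset.Icc 1 (Fintype.card m)).sup fun ℓ =>
    Finset.univ.sup fun i => (mPow A ℓ i i) ^ ((ℓ : ℝ)⁻¹)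

/-- A nonnegative matrix is irreducible if its weighted digraph is strongly connected. -/
def MaxIrreducible {m : Type*} [Fintype m] [DecidableEq m] (A : Matrix m m NNReal) : Prop :=
  ∀ i j, ∃ k : ℕ, 1 ≤ k ∧ 0 < mPow A k i j

namespace StmtAux
set_option linter.unusedSectionVars false

variable {V : Type*} [Fintype V] [DecidableEq V]

lemma le_mProd (A B : Matrix V V NNReal) (i k j : V) : A i k * B k j ≤ mProd A B i j :=
  Finset.le_sup (f := fun k => A i k * B k j) (Finset.mem_univ k)

lemma mProd_le {A B : Matrix V V NNReal} {i j : V} {c : NNReal}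
    (h : ∀ k, A i k * B k j ≤ c) : mProd A B i j ≤ c :=
  Finset.sup_le fun k _ => h k

lemma mProd_assoc (A B C : Matrix V V NNReal) : mProd (mProd A B) C = mProd A (mProd B C) := by
  funext i j
  apply le_antisymm
  · apply mProd_le; intro k
    rw [show mProd A B i k = Finset.univ.sup fun l => A i l * B l k from rfl,
      NNReal.finset_sup_mul]
    apply Finset.sup_le; intro l _
    calc A i l * B l k * C k j = A i l * (B l k * C k j) := mul_assoc _ _ _
      _ ≤ A i l * mProd B C l j := mul_le_mul_right (le_mProd _ _ _ _ _) _
      _ ≤ _ := le_mProd _ _ _ _ _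
  · apply mProd_le; intro l
    rw [show mProd B C l j = Finset.univ.sup fun k => B l k * C k j from rfl,
      NNReal.mul_finset_sup]
    apply Finset.sup_le; intro k _
    calc A i l * (B l k * C k j) = A i l * B l k * C k j := (mul_assoc _ _ _).symm
      _ ≤ mProd A B i k * C k j := mul_le_mul_left (le_mProd _ _ _ _ _) _
      _ ≤ _ := le_mProd _ _ _ _ _

lemma mProd_one (A : Matrix V V NNReal) : mProd A 1 = A := by
  funext i j
  apply le_antisymm
  · apply mProd_le; intro k
    rcases eq_or_ne k j with rfl | h
    · simp
    · simp [Matrix.one_apply_ne h]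
  · simpa using le_mProd A 1 i j j

lemma one_mProd (A : Matrix V V NNReal) : mProd 1 A = A := by
  funext i j
  apply le_antisymm
  · apply mProd_le; intro k
    rcases eq_or_ne i k with rfl | h
    · simp
    · simp [Matrix.one_apply_ne h]
  · simpa using le_mProd 1 A i i j

lemma mPow_zero (A : Matrix V V NNReal) : mPow A 0 = 1 := rfl

lemma mPow_succ (A : Matrix V V NNReal) (k : ℕ) : mPow A (k + 1) = mProd A (mPow A k) := rfl

lemma mPow_one (A : Matrix V V NNReal) : mPow A 1 = A := by
  rw [mPow_succ, mPow_zero, mProd_one]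

lemma mPow_add (A : Matrix V V NNReal) (s t : ℕ) :
    mPow A (s + t) = mProd (mPow A s) (mPow A t) := by
  induction s with
  | zero => rw [Nat.zero_add, mPow_zero, one_mProd]
  | succ s ih =>
    rw [show s + 1 + t = (s + t) + 1 by omega, mPow_succ, ih, mPow_succ, mProd_assoc]

lemma mPow_add_entry (A : Matrix V V NNReal) (s t : ℕ) (p q r : V) :
    mPow A s p q * mPow A t q r ≤ mPow A (s + t) p r := by
  rw [mPow_add]; exact le_mProd _ _ _ _ _

lemma diag_pow_le (A : Matrix V V NNReal) (ℓ k : ℕ) (i : V) :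
    (mPow A ℓ i i) ^ k ≤ mPow A (ℓ * k) i i := by
  induction k with
  | zero =>
    rw [Nat.mul_zero, pow_zero, mPow_zero]
    simp [Matrix.one_apply_eq]
  | succ k ih =>
    rw [pow_succ, show ℓ * (k + 1) = ℓ * k + ℓ by ring]
    exact le_trans (mul_le_mul_left ih _) (mPow_add_entry A (ℓ * k) ℓ i i i)

noncomputable def eSup (A : Matrix V V NNReal) : NNReal :=
  Finset.univ.sup fun i => Finset.univ.sup fun j => A i j

lemma apply_le_eSup (A : Matrix V V NNReal) (i j : V) : A i j ≤ eSup A :=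
  le_trans (Finset.le_sup (f := fun j => A i j) (Finset.mem_univ j))
    (Finset.le_sup (f := fun i => Finset.univ.sup fun j => A i j) (Finset.mem_univ i))

lemma mPow_le_eSup (A : Matrix V V NNReal) (m : ℕ) (i j : V) :
    mPow A m i j ≤ eSup A ^ m := by
  induction m generalizing i j with
  | zero =>
    rw [mPow_zero, pow_zero, Matrix.one_apply]
    split <;> simp
  | succ m ih =>
    rw [mPow_succ, pow_succ']
    exact mProd_le fun k => mul_le_mul' (apply_le_eSup A i k) (ih k j)

lemma mProd_mPow_comm {A B : Matrix V V NNReal} (h : mProd A B = mProd B A) (m : ℕ) :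
    mProd B (mPow A m) = mProd (mPow A m) B := by
  induction m with
  | zero => rw [mPow_zero, mProd_one, one_mProd]
  | succ m ih =>
    rw [mPow_succ, ← mProd_assoc, ← h, mProd_assoc, ih, ← mProd_assoc]

lemma mPow_mProd {A B : Matrix V V NNReal} (h : mProd A B = mProd B A) (m : ℕ) :
    mPow (mProd A B) m = mProd (mPow A m) (mPow B m) := by
  induction m with
  | zero => rw [mPow_zero, mPow_zero, mPow_zero, mProd_one]
  | succ m ih =>
    rw [mPow_succ, ih, mPow_succ, mPow_succ]
    calc mProd (mProd A B) (mProd (mPow A m) (mPow B m))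
        = mProd A (mProd (mProd B (mPow A m)) (mPow B m)) := by
          rw [mProd_assoc, mProd_assoc]
      _ = mProd A (mProd (mProd (mPow A m) B) (mPow B m)) := by rw [mProd_mPow_comm h]
      _ = mProd (mProd A (mPow A m)) (mProd B (mPow B m)) := by
          rw [mProd_assoc (mPow A m), ← mProd_assoc A]

noncomputable def wgt (A : Matrix V V NNReal) (g : ℕ → V) (m : ℕ) : NNReal :=
  ∏ t ∈ Finset.range m, A (g t) (g (t + 1))

lemma wgt_le (A : Matrix V V NNReal) : ∀ (m : ℕ) (g : ℕ → V), wgt A g m ≤ mPow A m (g 0) (g m)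
  | 0, g => by
    rw [wgt, Finset.range_zero, Finset.prod_empty, mPow_zero]
    simp [Matrix.one_apply_eq]
  | (m+1), g => by
    rw [wgt, Finset.prod_range_succ']
    have h1 : (∏ t ∈ Finset.range m, A (g (t + 1)) (g (t + 1 + 1)))
        = wgt A (fun t => g (t + 1)) m := rfl
    rw [h1, mul_comm]
    calc A (g 0) (g 1) * wgt A (fun t => g (t + 1)) m
        ≤ A (g 0) (g 1) * mPow A m (g 1) (g (m + 1)) :=
          mul_le_mul_right (wgt_le A m (fun t => g (t + 1))) _
      _ ≤ mPow A (m + 1) (g 0) (g (m + 1)) := by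
          rw [mPow_succ]; exact le_mProd _ _ _ _ _

lemma mPow_succ_apply (A : Matrix V V NNReal) (m : ℕ) (p q : V) :
    mPow A (m + 1) p q = Finset.univ.sup fun k => A p k * mPow A m k q := rfl

lemma exists_walk (A : Matrix V V NNReal) :
    ∀ (m : ℕ) (p q : V), mPow A m p q = 0 ∨
      ∃ g : ℕ → V, g 0 = p ∧ g m = q ∧ mPow A m p q ≤ wgt A g m := by
  intro m
  induction m with
  | zero =>
    intro p q
    rcases eq_or_ne p q with rfl | h
    · exact Or.inr ⟨fun _ => p, rfl, rfl, by
        rw [wgt, Finset.range_zero, Finset.prod_empty, mPow_zero]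
        simp [Matrix.one_apply_eq]⟩
    · exact Or.inl (by rw [mPow_zero]; exact Matrix.one_apply_ne h)
  | succ m ih =>
    intro p q
    have hne : (Finset.univ : Finset V).Nonempty := ⟨p, Finset.mem_univ p⟩
    obtain ⟨k, -, hk⟩ := Finset.exists_mem_eq_sup Finset.univ hne
      (fun k => A p k * mPow A m k q)
    rw [← mPow_succ_apply A m p q] at hk
    rcases ih k q with h0 | ⟨g, hg0, hgm, hle⟩
    · exact Or.inl (by rw [hk, h0, mul_zero])
    · refine Or.inr ⟨fun t => if t = 0 then p else g (t - 1), rfl, by simp [hgm], ?_⟩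
      have hw : wgt A (fun t => if t = 0 then p else g (t - 1)) (m + 1)
          = (∏ t ∈ Finset.range m, A (g t) (g (t + 1))) * A p k := by
        rw [wgt, Finset.prod_range_succ']
        congr 1
        simp [hg0]
      rw [hw, hk, mul_comm (A p k)]
      exact mul_le_mul_left hle _

lemma diag_le_mu_pow (A : Matrix V V NNReal) {ℓ : ℕ}
    (hℓ : ℓ ∈ Finset.Icc 1 (Fintype.card V)) (i : V) : mPow A ℓ i i ≤ mu A ^ ℓ := by
  have hℓ1 : 1 ≤ ℓ := (Finset.mem_Icc.mp hℓ).1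
  have hℓ0 : (ℓ : ℕ) ≠ 0 := by omega
  have h1 : (mPow A ℓ i i) ^ ((ℓ : ℝ)⁻¹) ≤ mu A :=
    le_trans (Finset.le_sup (f := fun i => (mPow A ℓ i i) ^ ((ℓ : ℝ)⁻¹)) (Finset.mem_univ i))
      (Finset.le_sup (f := fun ℓ => Finset.univ.sup fun i => (mPow A ℓ i i) ^ ((ℓ : ℝ)⁻¹)) hℓ)
  calc mPow A ℓ i i = ((mPow A ℓ i i) ^ ((ℓ : ℝ)⁻¹)) ^ ℓ :=
        (NNReal.rpow_inv_natCast_pow _ hℓ0).symm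
    _ ≤ mu A ^ ℓ := pow_le_pow_left' h1 ℓ

lemma decomp (A : Matrix V V NNReal) {m : ℕ} (hm : Fintype.card V ≤ m) (p q : V) :
    mPow A m p q ≤ (Finset.Icc 1 (Fintype.card V)).sup
      (fun c => mu A ^ c * mPow A (m - c) p q) := by
  rcases exists_walk A m p q with h0 | ⟨g, hg0, hgm, hle⟩
  · rw [h0]; exact zero_le
  set N := Fintype.card V with hNdef
  obtain ⟨x, y, hxy, hgxy⟩ := Fintype.exists_ne_map_eq_of_card_lt
    (fun t : Fin (N + 1) => g t) (by simp; omega)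
  have key : ∃ a b : ℕ, a < b ∧ b ≤ N ∧ g a = g b := by
    rcases lt_or_gt_of_ne hxy with h | h
    · exact ⟨x, y, h, Nat.lt_succ_iff.mp y.isLt, hgxy⟩
    · exact ⟨y, x, h, Nat.lt_succ_iff.mp x.isLt, hgxy.symm⟩
  obtain ⟨a, b, hab, hbN, hgab⟩ := key
  set c := b - a with hcdef
  set d := m - b with hddef
  have hc1 : 1 ≤ c := by omega
  have hcN : c ≤ N := by omega
  have hcIcc : c ∈ Finset.Icc 1 N := Finset.mem_Icc.mpr ⟨hc1, hcN⟩
  have hbm : b ≤ m := le_trans hbN hm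
  set P1 : NNReal := ∏ t ∈ Finset.range a, A (g t) (g (t + 1)) with hP1
  set P2 : NNReal := ∏ t ∈ Finset.range c, A (g (a + t)) (g (a + t + 1)) with hP2
  set P3 : NNReal := ∏ t ∈ Finset.range d, A (g (a + (c + t))) (g (a + (c + t) + 1)) with hP3
  set P3' : NNReal := ∏ t ∈ Finset.range d, A (g (b + t)) (g (b + t + 1)) with hP3'
  have e33 : P3 = P3' := by
    rw [hP3, hP3']
    apply Finset.prod_congr rfl; intro t _
    rw [show a + (c + t) = b + t by omega]
  have hsplit : wgt A g m = P1 * (P2 * P3) := by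
    rw [hP1, hP2, hP3]
    simp only [wgt]
    rw [show m = a + (c + d) by omega, Finset.prod_range_add, Finset.prod_range_add]
  have ecyc : P2 ≤ mu A ^ c := by
    have h1 := wgt_le A c (fun t => g (a + t))
    have e : wgt A (fun t => g (a + t)) c = P2 := by
      rw [hP2]; simp only [wgt]
      apply Finset.prod_congr rfl; intro t _
      rw [show a + (t + 1) = a + t + 1 by omega]
    rw [e] at h1
    simp only [Nat.add_zero] at h1
    rw [show a + c = b by omega, ← hgab] at h1
    exact le_trans h1 (diag_le_mu_pow A hcIcc (g a))
  set h : ℕ → V := fun t => if t ≤ a then g t else g (t + c) with hhdef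
  have eh1 : (∏ t ∈ Finset.range a, A (h t) (h (t + 1))) = P1 := by
    rw [hP1]
    apply Finset.prod_congr rfl; intro t ht
    rw [Finset.mem_range] at ht
    simp only [hhdef]
    rw [if_pos (show t ≤ a by omega), if_pos (show t + 1 ≤ a by omega)]
  have eh2 : (∏ t ∈ Finset.range d, A (h (a + t)) (h (a + t + 1))) = P3' := by
    rw [hP3']
    apply Finset.prod_congr rfl; intro t _
    simp only [hhdef]
    rcases Nat.eq_zero_or_pos t with rfl | htpos
    · rw [if_pos (show a + 0 ≤ a by omega), if_neg (show ¬ a + 0 + 1 ≤ a by omega)]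
      rw [show a + 0 + 1 + c = b + 0 + 1 by omega, show a + 0 = a by omega, hgab,
        show b = b + 0 by omega]
    · rw [if_neg (show ¬ a + t ≤ a by omega), if_neg (show ¬ a + t + 1 ≤ a by omega)]
      rw [show a + t + c = b + t by omega, show a + t + 1 + c = b + t + 1 by omega]
  have hremeq : wgt A h (a + d) = P1 * P3' := by
    simp only [wgt]
    rw [Finset.prod_range_add, ← eh1, ← eh2]
  have hh0 : h 0 = p := by
    simp only [hhdef]; rw [if_pos (Nat.zero_le a)]; exact hg0
  have hhend : h (a + d) = q := by
    simp only [hhdef]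
    rcases Nat.lt_or_ge a (a + d) with hlt | hge
    · rw [if_neg (by omega)]
      rw [show a + d + c = m by omega]; exact hgm
    · rw [if_pos (by omega)]
      rw [show a + d = a by omega, hgab, show b = m by omega]
      exact hgm
  have hrembd : P1 * P3' ≤ mPow A (m - c) p q := by
    rw [← hremeq]
    have h2 := wgt_le A (a + d) h
    rw [hh0, hhend] at h2
    rw [show m - c = a + d by omega]
    exact h2
  calc mPow A m p q ≤ wgt A g m := hle
    _ = P2 * (P1 * P3') := by rw [hsplit, e33]; ring
    _ ≤ mu A ^ c * mPow A (m - c) p q := mul_le_mul' ecyc hrembd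
    _ ≤ _ := Finset.le_sup (f := fun c => mu A ^ c * mPow A (m - c) p q) hcIcc

lemma diag_le_all (A : Matrix V V NNReal) :
    ∀ m, 1 ≤ m → ∀ p : V, mPow A m p p ≤ mu A ^ m := by
  intro m
  induction m using Nat.strong_induction_on with
  | _ m ih =>
    intro hm p
    by_cases hN : m ≤ Fintype.card V
    · exact diag_le_mu_pow A (Finset.mem_Icc.mpr ⟨hm, hN⟩) p
    · have hd := decomp A (le_of_lt (lt_of_not_ge hN)) p p
      refine le_trans hd (Finset.sup_le ?_)
      intro c hc
      rw [Finset.mem_Icc] at hc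
      have h1 : mPow A (m - c) p p ≤ mu A ^ (m - c) := ih (m - c) (by omega) (by omega) p
      calc mu A ^ c * mPow A (m - c) p p ≤ mu A ^ c * mu A ^ (m - c) := mul_le_mul_right h1 _
        _ = mu A ^ m := by rw [← pow_add]; congr 1; omega

lemma mu_le_eSup (A : Matrix V V NNReal) : mu A ≤ eSup A := by
  apply Finset.sup_le; intro ℓ hℓ; apply Finset.sup_le; intro i _
  have hℓ1 : 1 ≤ ℓ := (Finset.mem_Icc.mp hℓ).1
  have hℓ0 : (ℓ : ℕ) ≠ 0 := by omega
  calc (mPow A ℓ i i) ^ ((ℓ : ℝ)⁻¹) ≤ (eSup A ^ ℓ) ^ ((ℓ : ℝ)⁻¹) :=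
        NNReal.rpow_le_rpow (mPow_le_eSup A ℓ i i) (by positivity)
    _ = eSup A := NNReal.pow_rpow_inv_natCast _ hℓ0

lemma upper (A : Matrix V V NNReal) :
    ∀ (m : ℕ) (p q : V),
      mu A ^ (Fintype.card V) * mPow A m p q ≤ eSup A ^ (Fintype.card V) * mu A ^ m := by
  intro m
  induction m using Nat.strong_induction_on with
  | _ m ih =>
    intro p q
    set N := Fintype.card V with hN
    by_cases hNm : m ≤ N
    · calc mu A ^ N * mPow A m p q ≤ mu A ^ N * eSup A ^ m :=
            mul_le_mul_right (mPow_le_eSup A m p q) _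
        _ = mu A ^ (N - m) * eSup A ^ m * mu A ^ m := by
            rw [mul_right_comm, ← pow_add]; congr 2; omega
        _ ≤ eSup A ^ (N - m) * eSup A ^ m * mu A ^ m := by
            gcongr
            exact mu_le_eSup A
        _ = eSup A ^ N * mu A ^ m := by rw [← pow_add]; congr 2; omega
    · have hd := decomp A (le_of_lt (lt_of_not_ge hNm)) p q
      calc mu A ^ N * mPow A m p q
          ≤ mu A ^ N * (Finset.Icc 1 N).sup (fun c => mu A ^ c * mPow A (m - c) p q) :=
            mul_le_mul_right hd _
        _ = (Finset.Icc 1 N).sup (fun c => mu A ^ N * (mu A ^ c * mPow A (m - c) p q)) :=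
            NNReal.mul_finset_sup _ _ _
        _ ≤ eSup A ^ N * mu A ^ m := by
            apply Finset.sup_le; intro c hc
            rw [Finset.mem_Icc] at hc
            have h1 := ih (m - c) (by omega) p q
            calc mu A ^ N * (mu A ^ c * mPow A (m - c) p q)
                = mu A ^ c * (mu A ^ N * mPow A (m - c) p q) := by ring
              _ ≤ mu A ^ c * (eSup A ^ N * mu A ^ (m - c)) := mul_le_mul_right h1 _
              _ = eSup A ^ N * (mu A ^ c * mu A ^ (m - c)) := by ring
              _ = eSup A ^ N * mu A ^ m := by rw [← pow_add]; congr 2; omega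

lemma mu_pos {A : Matrix V V NNReal} (hA : MaxIrreducible A) (i : V) : 0 < mu A := by
  obtain ⟨k, hk1, hkpos⟩ := hA i i
  have h1 : 0 < mu A ^ k := lt_of_lt_of_le hkpos (diag_le_all A k hk1 i)
  by_contra hc
  push_neg at hc
  have : mu A = 0 := le_antisymm hc (zero_le)
  rw [this, zero_pow (by omega)] at h1
  exact lt_irrefl 0 h1

lemma mu_attain (A : Matrix V V NNReal) (hV : Nonempty V) :
    ∃ ℓ ∈ Finset.Icc 1 (Fintype.card V), ∃ i : V, mPow A ℓ i i = mu A ^ ℓ := by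
  have hN : 1 ≤ Fintype.card V := Fintype.card_pos
  obtain ⟨ℓ, hℓ, h1⟩ := Finset.exists_mem_eq_sup (Finset.Icc 1 (Fintype.card V))
    ⟨1, Finset.mem_Icc.mpr ⟨le_refl 1, hN⟩⟩
    (fun ℓ => Finset.univ.sup fun i => (mPow A ℓ i i) ^ ((ℓ : ℝ)⁻¹))
  obtain ⟨i, -, h2⟩ := Finset.exists_mem_eq_sup (Finset.univ : Finset V) Finset.univ_nonempty
    (fun i => (mPow A ℓ i i) ^ ((ℓ : ℝ)⁻¹))
  refine ⟨ℓ, hℓ, i, ?_⟩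
  have hmu : mu A = (mPow A ℓ i i) ^ ((ℓ : ℝ)⁻¹) := h1.trans h2
  have hℓ0 : (ℓ : ℕ) ≠ 0 := by
    have := (Finset.mem_Icc.mp hℓ).1; omega
  rw [hmu, NNReal.rpow_inv_natCast_pow _ hℓ0]

lemma mu_empty (A : Matrix V V NNReal) (hV : IsEmpty V) : mu A = 0 := by
  rw [mu, Fintype.card_eq_zero, Finset.Icc_eq_empty (by omega), Finset.sup_empty]
  rfl

lemma mPow_eq_zero_of_mu_zero {A : Matrix V V NNReal} (h0 : mu A = 0) {m : ℕ}
    (hm : Fintype.card V ≤ m) (p q : V) : mPow A m p q = 0 := by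
  apply le_antisymm _ (zero_le)
  refine le_trans (decomp A hm p q) (Finset.sup_le ?_)
  intro c hc
  rw [Finset.mem_Icc] at hc
  rw [h0, zero_pow (by omega), zero_mul]

lemma part1 (A B : Matrix V V NNReal) (hcomm : mProd A B = mProd B A) :
    mu (mProd A B) ≤ mu A * mu B := by
  set N := Fintype.card V with hN
  set C := mProd A B with hC
  apply Finset.sup_le; intro ℓ hℓ
  apply Finset.sup_le; intro i _
  have hℓ1 : 1 ≤ ℓ := (Finset.mem_Icc.mp hℓ).1
  have hℓ0 : (ℓ : ℕ) ≠ 0 := by omega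
  set x := mPow C ℓ i i with hx
  suffices hkey : x ≤ (mu A * mu B) ^ ℓ by
    calc x ^ ((ℓ : ℝ)⁻¹) ≤ ((mu A * mu B) ^ ℓ) ^ ((ℓ : ℝ)⁻¹) :=
          NNReal.rpow_le_rpow hkey (by positivity)
      _ = mu A * mu B := NNReal.pow_rpow_inv_natCast _ hℓ0
  have hNpos : 0 < N := hN ▸ Fintype.card_pos_iff.mpr ⟨i⟩
  rcases eq_or_ne (mu A * mu B) 0 with hs | hs
  · have hCz : mPow C (ℓ * N) i i = 0 := by
      rw [hC, mPow_mProd hcomm]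
      apply le_antisymm _ (zero_le)
      apply mProd_le; intro k
      rcases mul_eq_zero.mp hs with h0 | h0
      · rw [mPow_eq_zero_of_mu_zero h0 (Nat.le_mul_of_pos_left N (by omega)) i k, zero_mul]
      · rw [mPow_eq_zero_of_mu_zero h0 (Nat.le_mul_of_pos_left N (by omega)) k i, mul_zero]
    have hxz : x ^ N = 0 := le_antisymm (hCz ▸ diag_pow_le C ℓ N i) (zero_le)
    rw [pow_eq_zero_iff (by omega : N ≠ 0)] at hxz
    rw [hxz]
    exact zero_le
  · by_contra hlt
    push_neg at hlt
    have hxpos : 0 < x := lt_of_le_of_lt (zero_le) hlt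
    obtain ⟨hA0, hB0⟩ := mul_ne_zero_iff.mp hs
    have hApos : 0 < mu A := pos_iff_ne_zero.mpr hA0
    have hBpos : 0 < mu B := pos_iff_ne_zero.mpr hB0
    have hEA : 0 < eSup A := lt_of_lt_of_le hApos (mu_le_eSup A)
    have hEB : 0 < eSup B := lt_of_lt_of_le hBpos (mu_le_eSup B)
    set K := eSup A ^ N * eSup B ^ N with hK
    set μ2 := mu A ^ N * mu B ^ N with hμ2
    have hKpos : 0 < K := mul_pos (pow_pos hEA _) (pow_pos hEB _)
    have hμ2pos : 0 < μ2 := mul_pos (pow_pos hApos _) (pow_pos hBpos _)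
    set sA := mu A * mu B with hsA
    have hineq : ∀ k : ℕ, μ2 * x ^ k ≤ K * sA ^ (ℓ * k) := by
      intro k
      have h1 : x ^ k ≤ mPow C (ℓ * k) i i := diag_pow_le C ℓ k i
      have h2 : mPow C (ℓ * k) i i
          = mProd (mPow A (ℓ * k)) (mPow B (ℓ * k)) i i := by
        rw [hC, mPow_mProd hcomm]
      calc μ2 * x ^ k ≤ μ2 * mProd (mPow A (ℓ * k)) (mPow B (ℓ * k)) i i := by
            rw [← h2]; exact mul_le_mul_right h1 _
        _ = Finset.univ.sup
            (fun q => μ2 * (mPow A (ℓ * k) i q * mPow B (ℓ * k) q i)) :=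
            NNReal.mul_finset_sup _ _ _
        _ ≤ K * sA ^ (ℓ * k) := by
            apply Finset.sup_le; intro q _
            calc μ2 * (mPow A (ℓ * k) i q * mPow B (ℓ * k) q i)
                = (mu A ^ N * mPow A (ℓ * k) i q) * (mu B ^ N * mPow B (ℓ * k) q i) := by
                  rw [hμ2]; ring
              _ ≤ (eSup A ^ N * mu A ^ (ℓ * k)) * (eSup B ^ N * mu B ^ (ℓ * k)) :=
                  mul_le_mul' (upper A (ℓ * k) i q) (upper B (ℓ * k) q i)
              _ = K * sA ^ (ℓ * k) := by rw [hK, hsA, mul_pow]; ring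
    set ρ := sA ^ ℓ / x with hρdef
    have hρlt : ρ < 1 := NNReal.div_lt_one_of_lt hlt
    have hεpos : 0 < μ2 / K :=
      pos_iff_ne_zero.mpr (div_ne_zero (ne_of_gt hμ2pos) (ne_of_gt hKpos))
    obtain ⟨k, hk⟩ := exists_pow_lt_of_lt_one hεpos hρlt
    have h := hineq k
    have hsx : sA ^ ℓ = ρ * x := by
      rw [hρdef, div_mul_cancel₀ _ (ne_of_gt hxpos)]
    rw [pow_mul, hsx, mul_pow] at h
    have hchain : K * (ρ ^ k * x ^ k) < μ2 * x ^ k := by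
      have h3 : ρ ^ k * (K * x ^ k) < (μ2 / K) * (K * x ^ k) :=
        mul_lt_mul_of_pos_right hk (mul_pos hKpos (pow_pos hxpos k))
      calc K * (ρ ^ k * x ^ k) = ρ ^ k * (K * x ^ k) := by ring
        _ < (μ2 / K) * (K * x ^ k) := h3
        _ = μ2 * x ^ k := by rw [← mul_assoc, div_mul_cancel₀ _ (ne_of_gt hKpos)]
    exact absurd h (not_le_of_gt hchain)

lemma part2 (A B : Matrix V V NNReal) (hcomm : mProd A B = mProd B A)
    (hA : MaxIrreducible A) (hB : MaxIrreducible B) :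
    mu A * mu B ≤ mu (mProd A B) := by
  rcases isEmpty_or_nonempty V with hV | hV
  · rw [mu_empty A hV, zero_mul]; exact zero_le
  set C := mProd A B with hC
  obtain ⟨ℓ, hℓ, p, hp⟩ := mu_attain A hV
  obtain ⟨r, hr, q, hq⟩ := mu_attain B hV
  have hℓ1 : 1 ≤ ℓ := (Finset.mem_Icc.mp hℓ).1
  have hr1 : 1 ≤ r := (Finset.mem_Icc.mp hr).1
  obtain ⟨s, hs1, hspos⟩ := hB p q
  obtain ⟨t, ht1, htpos⟩ := hB q p
  obtain ⟨r', hr'⟩ := Nat.exists_eq_add_of_le hr1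
  rw [Nat.add_comm] at hr'
  set a := mu A with ha'
  set b := mu B with hb'
  have ha : 0 < a := mu_pos hA p
  have hb : 0 < b := mu_pos hB p
  set β : NNReal := mPow B s p q * mPow B t q p with hβ
  have hβpos : 0 < β := mul_pos hspos htpos
  have key : ∀ k : ℕ, s + t ≤ ℓ * k →
      (a * b) ^ (ℓ * r * k) * β ^ r ≤ mu C ^ (ℓ * r * k) * b ^ (r * (s + t)) := by
    intro k hk
    obtain ⟨u', hu'⟩ := Nat.exists_eq_add_of_le hk
    have hk1 : 1 ≤ k := by
      rcases Nat.eq_zero_or_pos k with rfl | h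
      · rw [Nat.mul_zero] at hk; omega
      · exact h
    have hm1 : 1 ≤ ℓ * r * k := Nat.mul_pos (Nat.mul_pos hℓ1 hr1) hk1
    have hA1 : a ^ (ℓ * r * k) ≤ mPow A (ℓ * r * k) p p := by
      have h1 := diag_pow_le A ℓ (r * k) p
      rw [hp, ← pow_mul, ← Nat.mul_assoc] at h1
      exact h1
    have hq' : b ^ (r * u') ≤ mPow B (r * u') q q := by
      have h1 := diag_pow_le B r u' q
      rw [hq, ← pow_mul] at h1
      exact h1
    have hcyc : β ^ r' ≤ mPow B ((s + t) * r') q q := by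
      have h1 : β ≤ mPow B (s + t) q q := by
        rw [hβ]
        calc mPow B s p q * mPow B t q p = mPow B t q p * mPow B s p q := mul_comm _ _
          _ ≤ mPow B (t + s) q q := mPow_add_entry B t s q p q
          _ = mPow B (s + t) q q := by rw [Nat.add_comm]
      calc β ^ r' ≤ (mPow B (s + t) q q) ^ r' := pow_le_pow_left' h1 _
        _ ≤ mPow B ((s + t) * r') q q := diag_pow_le B (s + t) r' q
    have hB1 : b ^ (r * u') * β ^ r ≤ mPow B (ℓ * r * k) p p := by
      have estep : b ^ (r * u') * β ^ r
          = mPow B s p q * (b ^ (r * u') * (β ^ r' * mPow B t q p)) := by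
        rw [hr', pow_succ, hβ]; ring
      rw [estep]
      calc mPow B s p q * (b ^ (r * u') * (β ^ r' * mPow B t q p))
          ≤ mPow B s p q * (mPow B (r * u') q q
            * (mPow B ((s + t) * r') q q * mPow B t q p)) :=
            mul_le_mul_right (mul_le_mul' hq' (mul_le_mul_left hcyc _)) _
        _ ≤ mPow B s p q * (mPow B (r * u') q q * mPow B ((s + t) * r' + t) q p) :=
            mul_le_mul_right (mul_le_mul_right (mPow_add_entry B _ _ q q p) _) _
        _ ≤ mPow B s p q * mPow B (r * u' + ((s + t) * r' + t)) q p :=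
            mul_le_mul_right (mPow_add_entry B _ _ q q p) _
        _ ≤ mPow B (s + (r * u' + ((s + t) * r' + t))) p p := mPow_add_entry B _ _ p q p
        _ = mPow B (ℓ * r * k) p p := by
            congr 1
            have e6 : ℓ * r * k = r * (ℓ * k) := by ring
            rw [e6, hu', hr']; ring
    have hprod : a ^ (ℓ * r * k) * (b ^ (r * u') * β ^ r) ≤ mPow C (ℓ * r * k) p p := by
      calc a ^ (ℓ * r * k) * (b ^ (r * u') * β ^ r)
          ≤ mPow A (ℓ * r * k) p p * mPow B (ℓ * r * k) p p := mul_le_mul' hA1 hB1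
        _ ≤ mPow C (ℓ * r * k) p p := by
            rw [hC, mPow_mProd hcomm]; exact le_mProd _ _ p p p
    have hCle : mPow C (ℓ * r * k) p p ≤ mu C ^ (ℓ * r * k) := diag_le_all C _ hm1 p
    have hbm : b ^ (ℓ * r * k) = b ^ (r * u') * b ^ (r * (s + t)) := by
      rw [← pow_add]
      congr 1
      have e6 : ℓ * r * k = r * (ℓ * k) := by ring
      rw [e6, hu']; ring
    calc (a * b) ^ (ℓ * r * k) * β ^ r
        = a ^ (ℓ * r * k) * (b ^ (r * u') * β ^ r) * b ^ (r * (s + t)) := by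
          rw [mul_pow, hbm]; ring
      _ ≤ mu C ^ (ℓ * r * k) * b ^ (r * (s + t)) :=
          mul_le_mul_left (le_trans hprod hCle) _
  by_contra hlt
  push_neg at hlt
  have habpos : 0 < a * b := mul_pos ha hb
  set K1 := b ^ (r * (s + t)) with hK1
  have hK1pos : 0 < K1 := pow_pos hb _
  have hεpos : 0 < β ^ r / K1 :=
    pos_iff_ne_zero.mpr (div_ne_zero (ne_of_gt (pow_pos hβpos r)) (ne_of_gt hK1pos))
  have hρlt : mu C / (a * b) < 1 := NNReal.div_lt_one_of_lt hlt
  obtain ⟨k0, hk0⟩ := exists_pow_lt_of_lt_one hεpos hρlt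
  set k := k0 + (s + t) + 1 with hkdef
  have hik : s + t ≤ ℓ * k :=
    le_trans (by omega) (Nat.le_mul_of_pos_left k (by omega))
  have h := key k hik
  have hmk0 : k0 ≤ ℓ * r * k :=
    le_trans (by omega) (Nat.le_mul_of_pos_left k (Nat.mul_pos hℓ1 hr1))
  have hmuc : mu C = (mu C / (a * b)) * (a * b) :=
    (div_mul_cancel₀ _ (ne_of_gt habpos)).symm
  have hρm : (mu C / (a * b)) ^ (ℓ * r * k) < β ^ r / K1 :=
    lt_of_le_of_lt (pow_le_pow_right_of_le_one' (le_of_lt hρlt) hmk0) hk0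
  have hchain : mu C ^ (ℓ * r * k) * K1 < (a * b) ^ (ℓ * r * k) * β ^ r := by
    calc mu C ^ (ℓ * r * k) * K1
        = (mu C / (a * b)) ^ (ℓ * r * k) * ((a * b) ^ (ℓ * r * k) * K1) := by
          rw [hmuc, mul_pow]
          rw [← hmuc]
          ring
      _ < (β ^ r / K1) * ((a * b) ^ (ℓ * r * k) * K1) :=
          mul_lt_mul_of_pos_right hρm (mul_pos (pow_pos habpos _) hK1pos)
      _ = ((β ^ r / K1) * K1) * (a * b) ^ (ℓ * r * k) := by ring
      _ = (a * b) ^ (ℓ * r * k) * β ^ r := by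
          rw [div_mul_cancel₀ _ (ne_of_gt hK1pos)]; ring
  exact absurd h (not_le_of_gt hchain)

end StmtAux

theorem stmt_12 (n : ℕ) (A B : Matrix (Fin n) (Fin n) NNReal)
    (hcomm : mProd A B = mProd B A) :
    mu (mProd A B) ≤ mu A * mu B ∧
      (MaxIrreducible A → MaxIrreducible B → mu (mProd A B) = mu A * mu B) := by
  exact ⟨StmtAux.part1 A B hcomm, fun hA hB =>
    le_antisymm (StmtAux.part1 A B hcomm) (StmtAux.part2 A B hcomm hA hB)⟩
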